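/- Fix δ ∈ ℝ. For the Sabra bilinear operator B with parameter δ, one has the skew-symmetry identity ⟨B(u,v), w⟩_H = −⟨B(u,w), v⟩_H for all u ∈ V and v, w ∈ H, and also for all v, w ∈ V and u ∈ H. -/

import Mathlib

open ComplexConjugate

noncomputable section

/-- Extension of a sequence `(u_n)_{n ≥ 1}` to integer indices, with the boundary
convention `u_m = 0` for `m ≤ 0` (in particular `u_0 = u_{-1} = 0`). -/
def ext (u : ℕ → ℂ) : ℤ → ℂ := fun m => if 1 ≤ m then u m.toNat else 0

/-- Wave numbers `k_n = k₀ 2^n`. -/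
def kseq (k₀ : ℝ) (n : ℤ) : ℝ := k₀ * 2 ^ n

/-- The Sabra bilinear operator with parameter `δ`. -/
def sabraB (k₀ δ : ℝ) (u v : ℕ → ℂ) : ℕ → ℂ := fun n =>
  (Complex.I / 3) * (kseq k₀ ((n : ℤ) + 1)) *
      ((1 + (δ : ℂ)) * conj (ext v ((n : ℤ) + 1)) * ext u ((n : ℤ) + 2)
        + (2 - (δ : ℂ)) * conj (ext u ((n : ℤ) + 1)) * ext v ((n : ℤ) + 2))
  + (Complex.I / 3) * (kseq k₀ (n : ℤ)) *
      ((1 - 2 * (δ : ℂ)) * conj (ext u ((n : ℤ) - 1)) * ext v ((n : ℤ) + 1)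
        - (1 + (δ : ℂ)) * conj (ext v ((n : ℤ) - 1)) * ext u ((n : ℤ) + 1))
  + (Complex.I / 3) * (kseq k₀ ((n : ℤ) - 1)) *
      ((2 - (δ : ℂ)) * ext u ((n : ℤ) - 1) * ext v ((n : ℤ) - 2)
        + (1 - 2 * (δ : ℂ)) * ext u ((n : ℤ) - 2) * ext v ((n : ℤ) - 1))

/-- Membership in `H`: square-summability over `n ≥ 1`. -/
def memH (u : ℕ → ℂ) : Prop := Summable (fun n : ℕ => ‖u (n + 1)‖ ^ 2)

/-- The `H`-norm `|u|_H = (∑_{n ≥ 1} |u_n|²)^{1/2}`. -/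
def normH (u : ℕ → ℂ) : ℝ := Real.sqrt (∑' n : ℕ, ‖u (n + 1)‖ ^ 2)

/-- Membership in `V`: `u ∈ H` and `∑_{n ≥ 1} k_n² |u_n|² < ∞`. -/
def memV (k₀ : ℝ) (u : ℕ → ℂ) : Prop :=
  memH u ∧ Summable (fun n : ℕ => (kseq k₀ (n + 1)) ^ 2 * ‖u (n + 1)‖ ^ 2)

/-- The `V`-norm `‖u‖_V = (∑_{n ≥ 1} k_n² |u_n|²)^{1/2}`. -/
def normV (k₀ : ℝ) (u : ℕ → ℂ) : ℝ :=
  Real.sqrt (∑' n : ℕ, (kseq k₀ (n + 1)) ^ 2 * ‖u (n + 1)‖ ^ 2)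

/-- The real inner product of `H`: `⟨u,v⟩_H = Re ∑_{n ≥ 1} u_n conj(v_n)`. -/
def innerH (u v : ℕ → ℂ) : ℝ := ∑' n : ℕ, (u (n + 1) * conj (v (n + 1))).re


set_option maxHeartbeats 1600000

namespace SabraSkew

/-! ### Basic lemmas about `kseq` and `ext` -/

lemma kseq_pos {k₀ : ℝ} (hk₀ : 0 < k₀) (m : ℤ) : 0 < kseq k₀ m :=
  mul_pos hk₀ (zpow_pos two_pos m)

lemma kseq_succ (k₀ : ℝ) (m : ℤ) : kseq k₀ (m + 1) = 2 * kseq k₀ m := by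
  unfold kseq
  rw [zpow_add_one₀ (by norm_num : (2:ℝ) ≠ 0)]
  ring

lemma kseq_mono {k₀ : ℝ} (hk₀ : 0 < k₀) {a b : ℤ} (h : a ≤ b) : kseq k₀ a ≤ kseq k₀ b :=
  mul_le_mul_of_nonneg_left (zpow_le_zpow_right₀ one_le_two h) hk₀.le

lemma ext_nonpos (x : ℕ → ℂ) {m : ℤ} (h : m ≤ 0) : ext x m = 0 := by
  simp [ext]; intro h'; omega

lemma ext_coe (x : ℕ → ℂ) (n : ℕ) : ext x ((n:ℤ)+1) = x (n+1) := by
  have : ((n:ℤ)+1) = ((n+1:ℕ):ℤ) := by push_cast; ring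
  rw [this]; simp [ext]

lemma summable_ext_sq {x : ℕ → ℂ} (hx : memH x) : Summable fun m : ℤ => ‖ext x m‖ ^ 2 := by
  apply Summable.of_nat_of_neg
  · rw [← summable_nat_add_iff 1]
    apply hx.congr
    intro n
    rw [show ((n+1:ℕ):ℤ) = (n:ℤ)+1 by push_cast; ring, ext_coe]
  · have : (fun n : ℕ => ‖ext x (-(n:ℤ))‖ ^ 2) = fun _ => 0 := by
      funext n; rw [ext_nonpos x (by omega : (-(n:ℤ)) ≤ 0)]; simp
    rw [this]; exact summable_zero

lemma summable_ext_ksq {k₀ : ℝ} {x : ℕ → ℂ} (hx : memV k₀ x) :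
    Summable fun m : ℤ => (kseq k₀ m * ‖ext x m‖) ^ 2 := by
  apply Summable.of_nat_of_neg
  · rw [← summable_nat_add_iff 1]
    apply hx.2.congr
    intro n
    rw [show ((n+1:ℕ):ℤ) = (n:ℤ)+1 by push_cast; ring, ext_coe]
    ring
  · have : (fun n : ℕ => (kseq k₀ (-(n:ℤ)) * ‖ext x (-(n:ℤ))‖) ^ 2) = fun _ => 0 := by
      funext n; rw [ext_nonpos x (by omega : (-(n:ℤ)) ≤ 0)]; simp
    rw [this]; exact summable_zero

/-- A uniform bound for the values of a sequence in `H`. -/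
def boundH (x : ℕ → ℂ) : ℝ := Real.sqrt (∑' n : ℕ, ‖x (n+1)‖ ^ 2)

lemma boundH_nonneg (x : ℕ → ℂ) : 0 ≤ boundH x := Real.sqrt_nonneg _

lemma ext_le_boundH {x : ℕ → ℂ} (hx : memH x) (m : ℤ) : ‖ext x m‖ ≤ boundH x := by
  rcases le_or_gt m 0 with h | h
  · rw [ext_nonpos x h]; simpa using boundH_nonneg x
  · have h1 : ext x m = x ((m.toNat - 1) + 1) := by
      simp only [ext, if_pos (by omega : (1:ℤ) ≤ m)]
      congr 1; omega
    rw [h1]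
    have h2 : ‖x ((m.toNat - 1) + 1)‖ ^ 2 ≤ ∑' n : ℕ, ‖x (n+1)‖ ^ 2 :=
      Summable.le_tsum hx _ (fun _ _ => by positivity)
    calc ‖x ((m.toNat - 1) + 1)‖ = Real.sqrt (‖x ((m.toNat - 1) + 1)‖ ^ 2) :=
          (Real.sqrt_sq (norm_nonneg _)).symm
      _ ≤ boundH x := Real.sqrt_le_sqrt h2

/-! ### Summability of triple-product terms -/

/-- A triple-product term. -/
def tp (k₀ : ℝ) (u v w : ℕ → ℂ) (c : ℝ) (s i j l : ℤ) (n : ℕ) : ℝ :=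
  c * (kseq k₀ ((n:ℤ)+s) * (‖ext u ((n:ℤ)+i)‖ * (‖ext v ((n:ℤ)+j)‖ * ‖ext w ((n:ℤ)+l)‖)))

lemma core {F : ℕ → ℝ} (f g : ℤ → ℝ) (hf : Summable fun m : ℤ => f m ^ 2)
    (hg : Summable fun m : ℤ => g m ^ 2) (i j : ℤ) (C : ℝ) (hC : 0 ≤ C)
    (hFn : ∀ n, 0 ≤ F n)
    (hb : ∀ n : ℕ, F n ≤ C * (f ((n:ℤ)+i) * g ((n:ℤ)+j))) : Summable F := by
  apply Summable.of_nonneg_of_le hFn (f := fun n : ℕ => C * (f ((n:ℤ)+i) ^ 2 + g ((n:ℤ)+j) ^ 2))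
  · intro n
    refine (hb n).trans (mul_le_mul_of_nonneg_left ?_ hC)
    nlinarith [sq_nonneg (f ((n:ℤ)+i) - g ((n:ℤ)+j)), sq_nonneg (f ((n:ℤ)+i) + g ((n:ℤ)+j))]
  · apply Summable.mul_left
    exact (hf.comp_injective (fun a b hab => by omega)).add
      (hg.comp_injective (fun a b hab => by omega))

lemma tripleSummable {k₀ : ℝ} {u v w : ℕ → ℂ} (hk₀ : 0 < k₀)
    (h : (memV k₀ u ∧ memH v ∧ memH w) ∨ (memV k₀ v ∧ memV k₀ w ∧ memH u))
    (c : ℝ) (hc : 0 ≤ c) (s i j l : ℤ) (hsi : s ≤ i + 2) (hsj : s ≤ j + 2) :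
    Summable (tp k₀ u v w c s i j l) := by
  have knn : ∀ m : ℤ, 0 ≤ kseq k₀ m := fun m => (kseq_pos hk₀ m).le
  have hk4 : ∀ t : ℤ, kseq k₀ (t + 2) = 4 * kseq k₀ t := by
    intro t
    rw [show t+2 = (t+1)+1 by ring, kseq_succ, kseq_succ]; ring
  have tpnn : ∀ n : ℕ, 0 ≤ tp k₀ u v w c s i j l n := by
    intro n
    exact mul_nonneg hc (mul_nonneg (knn _) (mul_nonneg (norm_nonneg _)
      (mul_nonneg (norm_nonneg _) (norm_nonneg _))))
  rcases h with ⟨hu, hv, hw⟩ | ⟨hv, hw, hu⟩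
  · -- case 1 : f = k‖u‖, g = ‖v‖, w bounded
    set M := boundH w with hM
    have hMnn : 0 ≤ M := boundH_nonneg w
    apply core (fun m => kseq k₀ m * ‖ext u m‖) (fun m => ‖ext v m‖)
      (summable_ext_ksq hu) (summable_ext_sq hv) i j (c * (4 * M)) (by positivity) tpnn
    intro n
    unfold tp
    have h1 : kseq k₀ ((n:ℤ)+s) ≤ 4 * kseq k₀ ((n:ℤ)+i) := by
      rw [← hk4]
      exact kseq_mono hk₀ (by omega)
    have h2 : ‖ext w ((n:ℤ)+l)‖ ≤ M := ext_le_boundH hw _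
    have hu1 : (0:ℝ) ≤ ‖ext u ((n:ℤ)+i)‖ := norm_nonneg _
    have hv1 : (0:ℝ) ≤ ‖ext v ((n:ℤ)+j)‖ := norm_nonneg _
    have main : kseq k₀ ((n:ℤ)+s) * (‖ext u ((n:ℤ)+i)‖ * (‖ext v ((n:ℤ)+j)‖ * ‖ext w ((n:ℤ)+l)‖))
        ≤ (4 * kseq k₀ ((n:ℤ)+i)) * (‖ext u ((n:ℤ)+i)‖ * (‖ext v ((n:ℤ)+j)‖ * M)) := by
      refine le_trans (mul_le_mul_of_nonneg_left (mul_le_mul_of_nonneg_left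
            (mul_le_mul_of_nonneg_left h2 hv1) hu1) (knn _)) ?_
      exact mul_le_mul_of_nonneg_right h1 (mul_nonneg hu1 (mul_nonneg hv1 hMnn))
    calc c * (kseq k₀ ((n:ℤ)+s) * (‖ext u ((n:ℤ)+i)‖ * (‖ext v ((n:ℤ)+j)‖ * ‖ext w ((n:ℤ)+l)‖)))
        ≤ c * ((4 * kseq k₀ ((n:ℤ)+i)) * (‖ext u ((n:ℤ)+i)‖ * (‖ext v ((n:ℤ)+j)‖ * M))) :=
          mul_le_mul_of_nonneg_left main hc
      _ = c * (4 * M) * ((kseq k₀ ((n:ℤ)+i) * ‖ext u ((n:ℤ)+i)‖) * ‖ext v ((n:ℤ)+j)‖) := by ring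
  · -- case 2 : f = k‖v‖, g = ‖u‖, w bounded
    set M := boundH w with hM
    have hMnn : 0 ≤ M := boundH_nonneg w
    apply core (fun m => kseq k₀ m * ‖ext v m‖) (fun m => ‖ext u m‖)
      (summable_ext_ksq hv) (summable_ext_sq hu) j i (c * (4 * M)) (by positivity) tpnn
    intro n
    unfold tp
    have h1 : kseq k₀ ((n:ℤ)+s) ≤ 4 * kseq k₀ ((n:ℤ)+j) := by
      rw [← hk4]
      exact kseq_mono hk₀ (by omega)
    have h2 : ‖ext w ((n:ℤ)+l)‖ ≤ M := ext_le_boundH hw.1 _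
    have hu1 : (0:ℝ) ≤ ‖ext u ((n:ℤ)+i)‖ := norm_nonneg _
    have hv1 : (0:ℝ) ≤ ‖ext v ((n:ℤ)+j)‖ := norm_nonneg _
    have main : kseq k₀ ((n:ℤ)+s) * (‖ext u ((n:ℤ)+i)‖ * (‖ext v ((n:ℤ)+j)‖ * ‖ext w ((n:ℤ)+l)‖))
        ≤ (4 * kseq k₀ ((n:ℤ)+j)) * (‖ext u ((n:ℤ)+i)‖ * (‖ext v ((n:ℤ)+j)‖ * M)) := by
      refine le_trans (mul_le_mul_of_nonneg_left (mul_le_mul_of_nonneg_left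
            (mul_le_mul_of_nonneg_left h2 hv1) hu1) (knn _)) ?_
      exact mul_le_mul_of_nonneg_right h1 (mul_nonneg hu1 (mul_nonneg hv1 hMnn))
    calc c * (kseq k₀ ((n:ℤ)+s) * (‖ext u ((n:ℤ)+i)‖ * (‖ext v ((n:ℤ)+j)‖ * ‖ext w ((n:ℤ)+l)‖)))
        ≤ c * ((4 * kseq k₀ ((n:ℤ)+j)) * (‖ext u ((n:ℤ)+i)‖ * (‖ext v ((n:ℤ)+j)‖ * M))) :=
          mul_le_mul_of_nonneg_left main hc
      _ = c * (4 * M) * ((kseq k₀ ((n:ℤ)+j) * ‖ext v ((n:ℤ)+j)‖) * ‖ext u ((n:ℤ)+i)‖) := by ring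

/-! ### Norm bounds -/

lemma nadd6 (a b c d e f : ℂ) : ‖a+b+c+d+e+f‖ ≤ ‖a‖+‖b‖+‖c‖+‖d‖+‖e‖+‖f‖ := by
  have h1 := norm_add_le (a+b+c+d+e) f
  have h2 := norm_add_le (a+b+c+d) e
  have h3 := norm_add_le (a+b+c) d
  have h4 := norm_add_le (a+b) c
  have h5 := norm_add_le a b
  linarith

lemma nadd8 (a b c d e f g h : ℂ) :
    ‖a+b+c+d+e+f+g+h‖ ≤ ‖a‖+‖b‖+‖c‖+‖d‖+‖e‖+‖f‖+‖g‖+‖h‖ := by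
  have h1 := norm_add_le (a+b+c+d+e+f+g) h
  have h2 := norm_add_le (a+b+c+d+e+f) g
  have h3 := norm_add_le (a+b+c+d+e) f
  have h4 := norm_add_le (a+b+c+d) e
  have h5 := norm_add_le (a+b+c) d
  have h6 := norm_add_le (a+b) c
  have h7 := norm_add_le a b
  linarith

lemma F_norm_bound {k₀ : ℝ} (hk₀ : 0 < k₀) (δ : ℝ) (u v w : ℕ → ℂ) (n : ℕ) :
    |(sabraB k₀ δ u v (n+1) * conj (w (n+1))).re| ≤
      tp k₀ u v w (‖1+(δ:ℂ)‖/3) 2 3 2 1 n + tp k₀ u v w (‖2-(δ:ℂ)‖/3) 2 2 3 1 n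
      + tp k₀ u v w (‖1-2*(δ:ℂ)‖/3) 1 0 2 1 n + tp k₀ u v w (‖1+(δ:ℂ)‖/3) 1 2 0 1 n
      + tp k₀ u v w (‖2-(δ:ℂ)‖/3) 0 0 (-1) 1 n + tp k₀ u v w (‖1-2*(δ:ℂ)‖/3) 0 (-1) 0 1 n := by
  rw [← ext_coe w n]
  set m1 := Complex.I/3 * ((kseq k₀ ((n:ℤ)+2) : ℝ) : ℂ) * ((1+(δ:ℂ)) * (conj (ext v ((n:ℤ)+2)) * (ext u ((n:ℤ)+3) * conj (ext w ((n:ℤ)+1))))) with hm1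
  set m2 := Complex.I/3 * ((kseq k₀ ((n:ℤ)+2) : ℝ) : ℂ) * ((2-(δ:ℂ)) * (conj (ext u ((n:ℤ)+2)) * (ext v ((n:ℤ)+3) * conj (ext w ((n:ℤ)+1))))) with hm2
  set m3 := Complex.I/3 * ((kseq k₀ ((n:ℤ)+1) : ℝ) : ℂ) * ((1-2*(δ:ℂ)) * (conj (ext u ((n:ℤ)+0)) * (ext v ((n:ℤ)+2) * conj (ext w ((n:ℤ)+1))))) with hm3
  set m4 := -(Complex.I/3 * ((kseq k₀ ((n:ℤ)+1) : ℝ) : ℂ) * ((1+(δ:ℂ)) * (conj (ext v ((n:ℤ)+0)) * (ext u ((n:ℤ)+2) * conj (ext w ((n:ℤ)+1)))))) with hm4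
  set m5 := Complex.I/3 * ((kseq k₀ ((n:ℤ)+0) : ℝ) : ℂ) * ((2-(δ:ℂ)) * (ext u ((n:ℤ)+0) * (ext v ((n:ℤ)+(-1)) * conj (ext w ((n:ℤ)+1))))) with hm5
  set m6 := Complex.I/3 * ((kseq k₀ ((n:ℤ)+0) : ℝ) : ℂ) * ((1-2*(δ:ℂ)) * (ext u ((n:ℤ)+(-1)) * (ext v ((n:ℤ)+0) * conj (ext w ((n:ℤ)+1))))) with hm6
  have hexp : sabraB k₀ δ u v (n+1) * conj (ext w ((n:ℤ)+1)) = m1 + m2 + m3 + m4 + m5 + m6 := by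
    rw [hm1, hm2, hm3, hm4, hm5, hm6]
    unfold sabraB
    push_cast
    ring_nf
  rw [hexp]
  have hre : |(m1+m2+m3+m4+m5+m6).re| ≤ ‖m1+m2+m3+m4+m5+m6‖ := Complex.abs_re_le_norm _
  refine hre.trans ((nadd6 m1 m2 m3 m4 m5 m6).trans_eq ?_)
  rw [hm1, hm2, hm3, hm4, hm5, hm6]
  have hk1 : |kseq k₀ ((n:ℤ)+2)| = kseq k₀ ((n:ℤ)+2) := abs_of_pos (kseq_pos hk₀ _)
  have hk2 : |kseq k₀ ((n:ℤ)+1)| = kseq k₀ ((n:ℤ)+1) := abs_of_pos (kseq_pos hk₀ _)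
  have hk3 : |kseq k₀ ((n:ℤ)+0)| = kseq k₀ ((n:ℤ)+0) := abs_of_pos (kseq_pos hk₀ _)
  simp only [tp, norm_neg, norm_mul, norm_div, Complex.norm_I, Complex.norm_real,
    RCLike.norm_conj, Real.norm_eq_abs, hk1, hk2, hk3]
  norm_num
  ring

lemma summable_F {k₀ δ : ℝ} {u v w : ℕ → ℂ} (hk₀ : 0 < k₀)
    (h : (memV k₀ u ∧ memH v ∧ memH w) ∨ (memV k₀ v ∧ memV k₀ w ∧ memH u)) :
    Summable (fun n : ℕ => (sabraB k₀ δ u v (n+1) * conj (w (n+1))).re) := by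
  have hgs : Summable (fun n : ℕ =>
      tp k₀ u v w (‖1+(δ:ℂ)‖/3) 2 3 2 1 n + tp k₀ u v w (‖2-(δ:ℂ)‖/3) 2 2 3 1 n
      + tp k₀ u v w (‖1-2*(δ:ℂ)‖/3) 1 0 2 1 n + tp k₀ u v w (‖1+(δ:ℂ)‖/3) 1 2 0 1 n
      + tp k₀ u v w (‖2-(δ:ℂ)‖/3) 0 0 (-1) 1 n + tp k₀ u v w (‖1-2*(δ:ℂ)‖/3) 0 (-1) 0 1 n) :=
    ((((((tripleSummable hk₀ h _ (by positivity) 2 3 2 1 (by norm_num) (by norm_num)).add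
      (tripleSummable hk₀ h _ (by positivity) 2 2 3 1 (by norm_num) (by norm_num))).add
      (tripleSummable hk₀ h _ (by positivity) 1 0 2 1 (by norm_num) (by norm_num))).add
      (tripleSummable hk₀ h _ (by positivity) 1 2 0 1 (by norm_num) (by norm_num))).add
      (tripleSummable hk₀ h _ (by positivity) 0 0 (-1) 1 (by norm_num) (by norm_num))).add
      (tripleSummable hk₀ h _ (by positivity) 0 (-1) 0 1 (by norm_num) (by norm_num)))
  exact Summable.of_norm_bounded hgs
    (fun n => by rw [Real.norm_eq_abs]; exact F_norm_bound hk₀ δ u v w n)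

/-! ### The telescoping function -/

def Paux (k₀ δ : ℝ) (u v w : ℕ → ℂ) (n : ℕ) : ℂ :=
  Complex.I * (kseq k₀ (n:ℤ)) / 3 *
    ( ((δ:ℂ) - 1/2) * (ext u ((n:ℤ)-2) * (ext v ((n:ℤ)-1) * conj (ext w (n:ℤ))))
    + ((δ:ℂ) - 1/2) * (ext u ((n:ℤ)-2) * (conj (ext v (n:ℤ)) * ext w ((n:ℤ)-1)))
    + ((δ:ℂ)/2 - 1) * (ext u ((n:ℤ)-1) * (ext v ((n:ℤ)-2) * conj (ext w (n:ℤ))))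
    + ((δ:ℂ)/2 - 1) * (ext u ((n:ℤ)-1) * (conj (ext v (n:ℤ)) * ext w ((n:ℤ)-2)))
    + ((δ:ℂ) - 2) * (ext u (n:ℤ) * (ext v ((n:ℤ)-1) * conj (ext w ((n:ℤ)+1))))
    + ((δ:ℂ) - 2) * (ext u (n:ℤ) * (conj (ext v ((n:ℤ)+1)) * ext w ((n:ℤ)-1)))
    + ((δ:ℂ) + 1) * (ext u ((n:ℤ)+1) * (conj (ext v ((n:ℤ)-1)) * conj (ext w (n:ℤ))))
    + ((δ:ℂ) + 1) * (ext u ((n:ℤ)+1) * (conj (ext v (n:ℤ)) * conj (ext w ((n:ℤ)-1)))) )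

lemma Paux_one (k₀ δ : ℝ) (u v w : ℕ → ℂ) : Paux k₀ δ u v w 1 = 0 := by
  unfold Paux
  rw [ext_nonpos u (by norm_num : ((1:ℕ):ℤ)-2 ≤ 0), ext_nonpos u (by norm_num : ((1:ℕ):ℤ)-1 ≤ 0),
    ext_nonpos v (by norm_num : ((1:ℕ):ℤ)-2 ≤ 0), ext_nonpos v (by norm_num : ((1:ℕ):ℤ)-1 ≤ 0),
    ext_nonpos w (by norm_num : ((1:ℕ):ℤ)-2 ≤ 0), ext_nonpos w (by norm_num : ((1:ℕ):ℤ)-1 ≤ 0)]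
  simp

lemma q_norm_bound {k₀ : ℝ} (hk₀ : 0 < k₀) (δ : ℝ) (u v w : ℕ → ℂ) (m : ℕ) :
    |(Paux k₀ δ u v w (m+1)).re| ≤
      tp k₀ u v w (‖(δ:ℂ)-1/2‖/3) 1 (-1) 0 1 m + tp k₀ u v w (‖(δ:ℂ)-1/2‖/3) 1 (-1) 1 0 m
      + tp k₀ u v w (‖(δ:ℂ)/2-1‖/3) 1 0 (-1) 1 m + tp k₀ u v w (‖(δ:ℂ)/2-1‖/3) 1 0 1 (-1) m
      + tp k₀ u v w (‖(δ:ℂ)-2‖/3) 1 1 0 2 m + tp k₀ u v w (‖(δ:ℂ)-2‖/3) 1 1 2 0 m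
      + tp k₀ u v w (‖(δ:ℂ)+1‖/3) 1 2 0 1 m + tp k₀ u v w (‖(δ:ℂ)+1‖/3) 1 2 1 0 m := by
  set p1 := Complex.I/3 * ((kseq k₀ ((m:ℤ)+1) : ℝ) : ℂ) * (((δ:ℂ)-1/2) * (ext u ((m:ℤ)+(-1)) * (ext v ((m:ℤ)+0) * conj (ext w ((m:ℤ)+1))))) with hp1
  set p2 := Complex.I/3 * ((kseq k₀ ((m:ℤ)+1) : ℝ) : ℂ) * (((δ:ℂ)-1/2) * (ext u ((m:ℤ)+(-1)) * (conj (ext v ((m:ℤ)+1)) * ext w ((m:ℤ)+0)))) with hp2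
  set p3 := Complex.I/3 * ((kseq k₀ ((m:ℤ)+1) : ℝ) : ℂ) * (((δ:ℂ)/2-1) * (ext u ((m:ℤ)+0) * (ext v ((m:ℤ)+(-1)) * conj (ext w ((m:ℤ)+1))))) with hp3
  set p4 := Complex.I/3 * ((kseq k₀ ((m:ℤ)+1) : ℝ) : ℂ) * (((δ:ℂ)/2-1) * (ext u ((m:ℤ)+0) * (conj (ext v ((m:ℤ)+1)) * ext w ((m:ℤ)+(-1))))) with hp4
  set p5 := Complex.I/3 * ((kseq k₀ ((m:ℤ)+1) : ℝ) : ℂ) * (((δ:ℂ)-2) * (ext u ((m:ℤ)+1) * (ext v ((m:ℤ)+0) * conj (ext w ((m:ℤ)+2))))) with hp5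
  set p6 := Complex.I/3 * ((kseq k₀ ((m:ℤ)+1) : ℝ) : ℂ) * (((δ:ℂ)-2) * (ext u ((m:ℤ)+1) * (conj (ext v ((m:ℤ)+2)) * ext w ((m:ℤ)+0)))) with hp6
  set p7 := Complex.I/3 * ((kseq k₀ ((m:ℤ)+1) : ℝ) : ℂ) * (((δ:ℂ)+1) * (ext u ((m:ℤ)+2) * (conj (ext v ((m:ℤ)+0)) * conj (ext w ((m:ℤ)+1))))) with hp7
  set p8 := Complex.I/3 * ((kseq k₀ ((m:ℤ)+1) : ℝ) : ℂ) * (((δ:ℂ)+1) * (ext u ((m:ℤ)+2) * (conj (ext v ((m:ℤ)+1)) * conj (ext w ((m:ℤ)+0))))) with hp8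
  have hexp : Paux k₀ δ u v w (m+1) = p1+p2+p3+p4+p5+p6+p7+p8 := by
    rw [hp1, hp2, hp3, hp4, hp5, hp6, hp7, hp8]
    unfold Paux
    push_cast
    ring_nf
  rw [hexp]
  have hre : |(p1+p2+p3+p4+p5+p6+p7+p8).re| ≤ ‖p1+p2+p3+p4+p5+p6+p7+p8‖ :=
    Complex.abs_re_le_norm _
  refine hre.trans ((nadd8 p1 p2 p3 p4 p5 p6 p7 p8).trans_eq ?_)
  rw [hp1, hp2, hp3, hp4, hp5, hp6, hp7, hp8]
  have hk2 : |kseq k₀ ((m:ℤ)+1)| = kseq k₀ ((m:ℤ)+1) := abs_of_pos (kseq_pos hk₀ _)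
  simp only [tp, norm_neg, norm_mul, norm_div, Complex.norm_I, Complex.norm_real,
    RCLike.norm_conj, Real.norm_eq_abs, hk2]
  norm_num
  ring

lemma summable_q {k₀ δ : ℝ} {u v w : ℕ → ℂ} (hk₀ : 0 < k₀)
    (h : (memV k₀ u ∧ memH v ∧ memH w) ∨ (memV k₀ v ∧ memV k₀ w ∧ memH u)) :
    Summable (fun m : ℕ => (Paux k₀ δ u v w (m+1)).re) := by
  have hgs : Summable (fun m : ℕ =>
      tp k₀ u v w (‖(δ:ℂ)-1/2‖/3) 1 (-1) 0 1 m + tp k₀ u v w (‖(δ:ℂ)-1/2‖/3) 1 (-1) 1 0 m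
      + tp k₀ u v w (‖(δ:ℂ)/2-1‖/3) 1 0 (-1) 1 m + tp k₀ u v w (‖(δ:ℂ)/2-1‖/3) 1 0 1 (-1) m
      + tp k₀ u v w (‖(δ:ℂ)-2‖/3) 1 1 0 2 m + tp k₀ u v w (‖(δ:ℂ)-2‖/3) 1 1 2 0 m
      + tp k₀ u v w (‖(δ:ℂ)+1‖/3) 1 2 0 1 m + tp k₀ u v w (‖(δ:ℂ)+1‖/3) 1 2 1 0 m) :=
    ((((((((tripleSummable hk₀ h _ (by positivity) 1 (-1) 0 1 (by norm_num) (by norm_num)).add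
      (tripleSummable hk₀ h _ (by positivity) 1 (-1) 1 0 (by norm_num) (by norm_num))).add
      (tripleSummable hk₀ h _ (by positivity) 1 0 (-1) 1 (by norm_num) (by norm_num))).add
      (tripleSummable hk₀ h _ (by positivity) 1 0 1 (-1) (by norm_num) (by norm_num))).add
      (tripleSummable hk₀ h _ (by positivity) 1 1 0 2 (by norm_num) (by norm_num))).add
      (tripleSummable hk₀ h _ (by positivity) 1 1 2 0 (by norm_num) (by norm_num))).add
      (tripleSummable hk₀ h _ (by positivity) 1 2 0 1 (by norm_num) (by norm_num))).add
      (tripleSummable hk₀ h _ (by positivity) 1 2 1 0 (by norm_num) (by norm_num)))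
  exact Summable.of_norm_bounded hgs
    (fun m => by rw [Real.norm_eq_abs]; exact q_norm_bound hk₀ δ u v w m)

/-! ### The key telescoping identity -/

lemma key_complex (k₀ δ : ℝ) (u v w : ℕ → ℂ) (n : ℕ) :
    (sabraB k₀ δ u v (n+1) * conj (ext w ((n:ℤ)+1))
      + sabraB k₀ δ u w (n+1) * conj (ext v ((n:ℤ)+1)))
    + conj (sabraB k₀ δ u v (n+1) * conj (ext w ((n:ℤ)+1))
      + sabraB k₀ δ u w (n+1) * conj (ext v ((n:ℤ)+1)))
    = (Paux k₀ δ u v w (n+2) + conj (Paux k₀ δ u v w (n+2)))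
      - (Paux k₀ δ u v w (n+1) + conj (Paux k₀ δ u v w (n+1))) := by
  have e2 : kseq k₀ (2+(n:ℤ)) = 4 * kseq k₀ (n:ℤ) := by
    rw [show 2+(n:ℤ) = ((n:ℤ)+1)+1 by ring, kseq_succ, kseq_succ]; ring
  have e1 : kseq k₀ (1+(n:ℤ)) = 2 * kseq k₀ (n:ℤ) := by
    rw [show 1+(n:ℤ) = (n:ℤ)+1 by ring, kseq_succ]
  simp only [sabraB, Paux, map_add, map_sub, map_mul, map_div₀, map_one, map_ofNat,
    Complex.conj_conj, Complex.conj_I, Complex.conj_ofReal]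
  push_cast
  ring_nf
  rw [e2, e1]
  push_cast
  ring

lemma key_re (k₀ δ : ℝ) (u v w : ℕ → ℂ) (n : ℕ) :
    (sabraB k₀ δ u v (n+1) * conj (w (n+1))).re
      + (sabraB k₀ δ u w (n+1) * conj (v (n+1))).re
    = (Paux k₀ δ u v w (n+2)).re - (Paux k₀ δ u v w (n+1)).re := by
  have h := key_complex k₀ δ u v w n
  rw [ext_coe w n, ext_coe v n] at h
  have h2 := congrArg Complex.re h
  simp only [Complex.add_re, Complex.sub_re, Complex.conj_re] at h2
  linarith

end SabraSkew

/-- Skew-symmetry: `⟨B(u,v), w⟩_H = −⟨B(u,w), v⟩_H` for all `u ∈ V`, `v, w ∈ H`,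
and also for all `v, w ∈ V`, `u ∈ H`, for the Sabra bilinear operator with parameter `δ`. -/
theorem sabra_skew_symmetry (k₀ δ : ℝ) (hk₀ : 0 < k₀) (u v w : ℕ → ℂ)
    (h : (memV k₀ u ∧ memH v ∧ memH w) ∨ (memV k₀ v ∧ memV k₀ w ∧ memH u)) :
    innerH (sabraB k₀ δ u v) w = - innerH (sabraB k₀ δ u w) v := by
  classical
  have h' : (memV k₀ u ∧ memH w ∧ memH v) ∨ (memV k₀ w ∧ memV k₀ v ∧ memH u) := by tauto
  have hS1 : Summable (fun n : ℕ => (sabraB k₀ δ u v (n+1) * conj (w (n+1))).re) :=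
    SabraSkew.summable_F hk₀ h
  have hS2 : Summable (fun n : ℕ => (sabraB k₀ δ u w (n+1) * conj (v (n+1))).re) :=
    SabraSkew.summable_F hk₀ h'
  have hq : Summable (fun m : ℕ => (SabraSkew.Paux k₀ δ u v w (m+1)).re) :=
    SabraSkew.summable_q hk₀ h
  have hq0 : Filter.Tendsto (fun m : ℕ => (SabraSkew.Paux k₀ δ u v w (m+1)).re)
      Filter.atTop (nhds 0) := hq.tendsto_atTop_zero
  set q : ℕ → ℝ := fun m => (SabraSkew.Paux k₀ δ u v w (m+1)).re with hqdef
  set F : ℕ → ℝ := fun n => (sabraB k₀ δ u v (n+1) * conj (w (n+1))).re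
      + (sabraB k₀ δ u w (n+1) * conj (v (n+1))).re with hFdef
  have hSF : Summable F := hS1.add hS2
  have hpart : ∀ N : ℕ, ∑ n ∈ Finset.range N, F n = q N := by
    intro N
    have : ∑ n ∈ Finset.range N, F n = ∑ n ∈ Finset.range N, (q (n+1) - q n) := by
      apply Finset.sum_congr rfl
      intro n _
      rw [hFdef, hqdef]
      simpa using SabraSkew.key_re k₀ δ u v w n
    rw [this, Finset.sum_range_sub]
    have hq00 : q 0 = 0 := by
      rw [hqdef]
      simp [SabraSkew.Paux_one]
    rw [hq00, sub_zero]
  have ht : Filter.Tendsto (fun N => ∑ n ∈ Finset.range N, F n) Filter.atTop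
      (nhds (∑' n, F n)) := hSF.hasSum.tendsto_sum_nat
  have ht2 : Filter.Tendsto (fun N => ∑ n ∈ Finset.range N, F n) Filter.atTop (nhds 0) := by
    have : (fun N => ∑ n ∈ Finset.range N, F n) = q := funext hpart
    rw [this]
    exact hq0
  have htsum0 : ∑' n, F n = 0 := tendsto_nhds_unique ht ht2
  have hsplit : ∑' n, F n = (∑' n : ℕ, (sabraB k₀ δ u v (n+1) * conj (w (n+1))).re)
      + ∑' n : ℕ, (sabraB k₀ δ u w (n+1) * conj (v (n+1))).re := Summable.tsum_add hS1 hS2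
  have : (∑' n : ℕ, (sabraB k₀ δ u v (n+1) * conj (w (n+1))).re)
      + (∑' n : ℕ, (sabraB k₀ δ u w (n+1) * conj (v (n+1))).re) = 0 := by
    rw [← hsplit, htsum0]
  unfold innerH
  linarith

end
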